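/- arXiv:2109.10081 — 5 statements merged into one kernel-verified Lean document; each statement's English description precedes it below -/
import Mathlib

section
/- With the setup of the previous statement (a short exact sequence 0 → A → B →π A → 0 of kG-modules satisfying the compatibility conditions for r and s), suppose additionally there is a commutative diagram of kG-modules comparing this sequence with a short exact sequence 0 → C →ι₀ C →π₀ A → 0 via maps π₀ : C → A (the left vertical), π₀' : C → B (the middle vertical) and identity on the right. Then the connecting homomorphism θ : H^*(G,A) → H^{*+1}(G,A) satisfies θ^n ∘ θ^{n−1} = 0 for all n ≥ 1; together with the graded-derivation property, (H^*(G,A), ∪, θ) is a differential graded algebra. -/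
/-- Coboundary on inhomogeneous group cochains, with the `G`-action given
explicitly by `ρ`. -/
def gd {G A : Type*} [Group G] [AddCommGroup A]
    (ρ : G → A → A) (n : ℕ) (φ : (Fin n → G) → A) : (Fin (n+1) → G) → A :=
  fun g => ρ (g 0) (φ fun i => g i.succ)
    + ∑ j : Fin (n+1), ((-1 : ℤ) ^ ((j : ℕ) + 1)) • φ (Fin.contractNth j (· * ·) g)

/-- Cup product of inhomogeneous cochains with coefficients in a `G`-algebra,
with the `G`-action given explicitly by `ρ`. -/
def cup {G A : Type*} [Group G] [Mul A]
    (ρ : G → A → A) {m n N : ℕ} (h : m + n = N)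
    (α : (Fin m → G) → A) (β : (Fin n → G) → A) : (Fin N → G) → A :=
  fun g => α (fun i => g ⟨(i : ℕ), by omega⟩) *
    ρ ((List.ofFn fun i : Fin m => g ⟨(i : ℕ), by omega⟩).prod)
      (β fun i => g ⟨m + (i : ℕ), by omega⟩)

lemma gd_map {G A A' : Type*} [Group G] [AddCommGroup A] [AddCommGroup A']
    (ρ : G → A → A) (ρ' : G → A' → A') (f : A → A')
    (hfadd : ∀ a b, f (a + b) = f a + f b)
    (hfG : ∀ g a, f (ρ g a) = ρ' g (f a))
    (n : ℕ) (φ : (Fin n → G) → A) :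
    (fun g => f (gd ρ n φ g)) = gd ρ' n (fun u => f (φ u)) := by
  funext g
  have : f (gd ρ n φ g) = (AddMonoidHom.mk' f hfadd) (gd ρ n φ g) := rfl
  rw [this]
  simp only [gd, map_add, map_sum, map_zsmul, AddMonoidHom.mk'_apply, hfG]

lemma gd_add {G A : Type*} [Group G] [AddCommGroup A]
    (ρ : G → A → A) (hρadd : ∀ g a a', ρ g (a + a') = ρ g a + ρ g a')
    (n : ℕ) (φ φ' : (Fin n → G) → A) :
    gd ρ n (fun u => φ u + φ' u) = fun g => gd ρ n φ g + gd ρ n φ' g := by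
  funext g
  simp only [gd, hρadd, smul_add, Finset.sum_add_distrib]
  abel

lemma contractNth_comp {G G' : Type*} [Mul G] [Mul G'] (e : G' → G)
    (he : ∀ a b, e (a * b) = e a * e b) {n : ℕ} (j : Fin (n+1)) (g : Fin (n+1) → G') :
    (fun i => e (Fin.contractNth j (· * ·) g i)) = Fin.contractNth j (· * ·) (fun i => e (g i)) := by
  funext i
  rcases lt_trichotomy (i : ℕ) (j : ℕ) with h | h | h
  · rw [Fin.contractNth_apply_of_lt _ _ _ _ h, Fin.contractNth_apply_of_lt _ _ _ _ h]
  · rw [Fin.contractNth_apply_of_eq _ _ _ _ h, Fin.contractNth_apply_of_eq _ _ _ _ h, he]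
  · rw [Fin.contractNth_apply_of_gt _ _ _ _ h, Fin.contractNth_apply_of_gt _ _ _ _ h]

lemma gd_transport {G G' A A' : Type*} [Group G] [Group G'] [AddCommGroup A] [AddCommGroup A']
    (e : G' → G) (hemul : ∀ a b, e (a * b) = e a * e b)
    (f : A → A') (ρ : G → A → A) (ρ' : G' → A' → A')
    (hfadd : ∀ a b, f (a + b) = f a + f b)
    (hcompat : ∀ g' a, f (ρ (e g') a) = ρ' g' (f a))
    (n : ℕ) (φ : (Fin n → G) → A) :
    (fun g' : Fin (n+1) → G' => f (gd ρ n φ (fun i => e (g' i))))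
      = gd ρ' n (fun u => f (φ (fun i => e (u i)))) := by
  funext g
  have : ∀ x, f x = (AddMonoidHom.mk' f hfadd) x := fun _ => rfl
  rw [this]
  simp only [gd, map_add, map_sum, map_zsmul, AddMonoidHom.mk'_apply, hcompat,
    contractNth_comp e hemul]

lemma gd_gd_small {G A : Type} [Group G] [AddCommGroup A]
    (ρ : Representation ℤ G A)
    (n : ℕ) (φ : (Fin n → G) → A) :
    gd (fun g a => ρ g a) (n+1) (gd (fun g a => ρ g a) n φ) = 0 := by
  let M : Rep ℤ G := Rep.of ρ
  have key : ∀ (m : ℕ) (ψ : (Fin m → G) → A),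
      gd (fun g a => ρ g a) m ψ = (inhomogeneousCochains.d M m).hom ψ := by
    intro m ψ; rfl
  have h := (groupCohomology.inhomogeneousCochains M).d_comp_d n (n+1) (n+2)
  rw [groupCohomology.inhomogeneousCochains.d_def,
      groupCohomology.inhomogeneousCochains.d_def] at h
  have h2 := congrArg (fun f => f.hom φ) h
  rw [key, key]
  exact h2

universe u v w

lemma gd_gd_u {G A : Type u} [Group G] [AddCommGroup A]
    (ρ : G → A → A)
    (hρ1 : ∀ a, ρ 1 a = a)
    (hρmul : ∀ g h a, ρ (g * h) a = ρ g (ρ h a))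
    (hρadd : ∀ g a a', ρ g (a + a') = ρ g a + ρ g a')
    (n : ℕ) (φ : (Fin n → G) → A) :
    gd ρ (n+1) (gd ρ n φ) = 0 := by
  let k : Type u := ULift.{u} ℤ
  let ρ' : Representation k G A :=
    { toFun := fun g =>
        { toFun := ρ g
          map_add' := hρadd g
          map_smul' := fun c a => by
            show ρ g (c.down • a) = c.down • ρ g a
            exact map_zsmul (AddMonoidHom.mk' (ρ g) (hρadd g)) c.down a }
      map_one' := by ext a; exact hρ1 a
      map_mul' := fun g h => by ext a; exact hρmul g h a }
  let M : Rep k G := Rep.of ρ'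
  have key : ∀ (m : ℕ) (ψ : (Fin m → G) → A),
      gd ρ m ψ = (inhomogeneousCochains.d M m).hom ψ := by
    intro m ψ
    funext g
    show _ = _ + Finset.univ.sum fun j : Fin (m+1) =>
      ((-1 : k) ^ ((j : ℕ)+1)) • ψ (Fin.contractNth j (· * ·) g)
    have hd : ∀ m' : ℕ, ((-1 : k) ^ m').down = (-1 : ℤ) ^ m' := by
      intro m'
      induction m' with
      | zero => rfl
      | succ m' ih => rw [pow_succ, pow_succ, ← ih]; rfl
    have : ∀ j : Fin (m+1), ((-1 : k) ^ ((j : ℕ)+1)) • ψ (Fin.contractNth j (· * ·) g)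
        = ((-1 : ℤ) ^ ((j : ℕ)+1)) • ψ (Fin.contractNth j (· * ·) g) := by
      intro j
      rw [ULift.smul_def, hd]
    rw [Finset.sum_congr rfl fun j _ => this j]
    rfl
  have h := (groupCohomology.inhomogeneousCochains M).d_comp_d n (n+1) (n+2)
  rw [groupCohomology.inhomogeneousCochains.d_def,
      groupCohomology.inhomogeneousCochains.d_def] at h
  have h2 := congrArg (fun f => f.hom φ) h
  rw [key, key]
  exact h2

lemma gd_gd {G : Type v} {A : Type w} [Group G] [AddCommGroup A]
    (ρ : G → A → A)
    (hρ1 : ∀ a, ρ 1 a = a)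
    (hρmul : ∀ g h a, ρ (g * h) a = ρ g (ρ h a))
    (hρadd : ∀ g a a', ρ g (a + a') = ρ g a + ρ g a')
    (n : ℕ) (φ : (Fin n → G) → A) :
    gd ρ (n+1) (gd ρ n φ) = 0 := by
  let G' : Type (max v w) := ULift.{w} G
  let A' : Type (max v w) := ULift.{v} A
  let ρ' : G' → A' → A' := fun g a => ⟨ρ g.down a.down⟩
  let e : G' → G := ULift.down
  have hemul : ∀ a b : G', e (a * b) = e a * e b := fun _ _ => rfl
  have h1 := gd_transport e hemul (ULift.up : A → A') ρ ρ' (fun _ _ => rfl)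
    (fun _ _ => rfl) n φ
  have h2 := gd_transport e hemul (ULift.up : A → A') ρ ρ' (fun _ _ => rfl)
    (fun _ _ => rfl) (n+1) (gd ρ n φ)
  rw [h1] at h2
  have h3 := gd_gd_u ρ' (fun a => congrArg ULift.up (hρ1 a.down))
    (fun g h a => congrArg ULift.up (hρmul g.down h.down a.down))
    (fun g a a' => congrArg ULift.up (hρadd g.down a.down a'.down))
    n (fun u => ULift.up (φ fun i => e (u i)))
  funext g
  have h4 := congrFun h2 (fun i => ULift.up (g i))
  simp only [h3] at h4
  have : gd ρ (n+1) (gd ρ n φ) (fun i => e (ULift.up (g i))) = gd ρ (n+1) (gd ρ n φ) g := rfl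
  rw [this] at h4
  exact congrArg ULift.down h4

/-- if moreover the short exact sequence `0 → A → B →π A → 0` is
compared, via a commutative diagram, with a short exact sequence
`0 → C →ι₀ C →π₀ A → 0` of `kG`-modules (with verticals `π₀ : C → A`,
`π₀' : C → B` and the identity on the right), then the connecting homomorphism
`θ` squares to zero on cohomology: for any cocycle `φ`, `θ(θ(φ))` is a
coboundary.  Together with the graded-derivation property this makes
`(H^*(G,A), ∪, θ)` a DG-algebra. -/
theorem stmt6 {k G A B : Type*} [CommRing k] [Group G] [Fintype G]
    [Ring A] [Algebra k A] [Ring B] [Algebra k B]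
    (ρA : G → A → A) (ρB : G → B → B)
    -- `G` acts on the `k`-algebra `A` by algebra automorphisms
    (hρA1 : ∀ a, ρA 1 a = a)
    (hρAmul : ∀ g h a, ρA (g * h) a = ρA g (ρA h a))
    (hρAadd : ∀ g a a', ρA g (a + a') = ρA g a + ρA g a')
    (hρAsmul : ∀ g (c : k) a, ρA g (c • a) = c • ρA g a)
    (hρAring : ∀ g a a', ρA g (a * a') = ρA g a * ρA g a')
    -- `B` is a `k`-algebra and a `kG`-module
    (hρB1 : ∀ b, ρB 1 b = b)
    (hρBmul : ∀ g h b, ρB (g * h) b = ρB g (ρB h b))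
    (hρBadd : ∀ g b b', ρB g (b + b') = ρB g b + ρB g b')
    (hρBsmul : ∀ g (c : k) b, ρB g (c • b) = c • ρB g b)
    -- short exact sequence `0 → A →ι B →π A → 0` of `kG`-modules, `Ker π` an ideal
    (ι : A →ₗ[k] B) (π : B →ₗ[k] A)
    (hιG : ∀ g a, ι (ρA g a) = ρB g (ι a))
    (hπG : ∀ g b, π (ρB g b) = ρA g (π b))
    (hinj : Function.Injective ι) (hsurj : Function.Surjective π)
    (hexact : ∀ b, π b = 0 ↔ ∃ a, ι a = b)
    (hker : ∀ b b', π b = 0 → π (b * b') = 0 ∧ π (b' * b) = 0)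
    -- `r : Ker π → A` inverse of `ι'`, with the compatibility conditions
    (r : B → A)
    (hrι : ∀ a, r (ι a) = a)
    (hιr : ∀ b, π b = 0 → ι (r b) = b)
    (hradd : ∀ b b', π b = 0 → π b' = 0 → r (b + b') = r b + r b')
    (hrsmul : ∀ (c : k) b, π b = 0 → r (c • b) = c • r b)
    (hrG : ∀ g b, π b = 0 → r (ρB g b) = ρA g (r b))
    (hr2 : ∀ (g : G) b₁ b₂, π b₁ = 0 → r (b₁ * ρB g b₂) = r b₁ * ρA g (π b₂))
    (hr3 : ∀ (g : G) b₁ b₂, π b₂ = 0 → r (b₁ * ρB g b₂) = π b₁ * ρA g (r b₂))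
    -- set-theoretic section `s` of `π`, multiplicative up to `Ker π`
    (s : A → B) (hs : ∀ a, π (s a) = a)
    (hsmul : ∀ (g : G) a₁ a₂, π (s (a₁ * ρA g a₂) - s a₁ * ρB g (s a₂)) = 0)
    -- the comparison diagram with a second short exact sequence 0 → C → C → A → 0
    {C : Type*} [AddCommGroup C] [Module k C]
    (ρC : G → C → C)
    (hρC1 : ∀ c, ρC 1 c = c)
    (hρCmul : ∀ g h c, ρC (g * h) c = ρC g (ρC h c))
    (hρCadd : ∀ g c c', ρC g (c + c') = ρC g c + ρC g c')
    (hρCsmul : ∀ g (c0 : k) c, ρC g (c0 • c) = c0 • ρC g c)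
    (ι₀ : C →ₗ[k] C) (π₀ : C →ₗ[k] A) (π₀' : C →ₗ[k] B)
    (hι₀G : ∀ g c, ι₀ (ρC g c) = ρC g (ι₀ c))
    (hπ₀G : ∀ g c, π₀ (ρC g c) = ρA g (π₀ c))
    (hπ₀'G : ∀ g c, π₀' (ρC g c) = ρB g (π₀' c))
    (hinj₀ : Function.Injective ι₀) (hsurj₀ : Function.Surjective π₀)
    (hexact₀ : ∀ c, π₀ c = 0 ↔ ∃ c', ι₀ c' = c)
    (hcomm₁ : ∀ c, ι (π₀ c) = π₀' (ι₀ c))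
    (hcomm₂ : ∀ c, π (π₀' c) = π₀ c)
    -- a cocycle `φ ∈ Z^n(G,A)`
    (n : ℕ) (φ : (Fin n → G) → A) (hφ : gd ρA n φ = 0) :
    ∃ ψ : (Fin (n+1) → G) → A,
      (fun g => r (gd ρB (n+1)
          (fun t => s (r (gd ρB n (fun u => s (φ u)) t))) g))
        = gd ρA (n+1) ψ := by
  classical
  obtain ⟨t, ht⟩ := Classical.axiomOfChoice hsurj₀
  set q : C → C := fun c => if h : π₀ c = 0 then Classical.choose ((hexact₀ c).mp h) else 0
    with hqdef
  have hq : ∀ c, π₀ c = 0 → ι₀ (q c) = c := fun c h => by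
    simp only [hqdef, dif_pos h]
    exact Classical.choose_spec ((hexact₀ c).mp h)
  set φC : (Fin n → G) → C := fun u => t (φ u) with hφCdef
  set DC : (Fin (n+1) → G) → C := gd ρC n φC with hDCdef
  have hπ₀φC : (fun u => π₀ (φC u)) = φ := funext fun u => ht (φ u)
  have hDC0 : ∀ g, π₀ (DC g) = 0 := by
    intro g
    have h1 := congrFun (gd_map ρC ρA π₀ (map_add π₀) hπ₀G n φC) g
    rw [hDCdef, h1, hπ₀φC, hφ]
    rfl
  set σ : (Fin (n+1) → G) → C := fun g => q (DC g) with hσdef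
  have hσ : ∀ g, ι₀ (σ g) = DC g := fun g => hq _ (hDC0 g)
  set E : (Fin n → G) → A := fun u => r (s (φ u) - π₀' (φC u)) with hEdef
  have hEker : ∀ u, π (s (φ u) - π₀' (φC u)) = 0 := by
    intro u
    rw [map_sub, hs, hcomm₂, hφCdef]
    rw [ht (φ u), sub_self]
  have hιE : ∀ u, ι (E u) = s (φ u) - π₀' (φC u) := fun u => hιr _ (hEker u)
  set DB : (Fin (n+1) → G) → B := gd ρB n (fun u => s (φ u)) with hDBdef
  have hDBker : ∀ g, π (DB g) = 0 := by
    intro g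
    have h1 := congrFun (gd_map ρB ρA π (map_add π) hπG n (fun u => s (φ u))) g
    rw [hDBdef, h1, show (fun u => π (s (φ u))) = φ from funext fun u => hs (φ u), hφ]
    rfl
  set τ : (Fin (n+1) → G) → A := fun g => r (DB g) with hτdef
  have hιτ : ∀ g, ι (τ g) = DB g := fun g => hιr _ (hDBker g)
  have hτeq : ∀ g, τ g = π₀ (σ g) + gd ρA n E g := by
    intro g
    apply hinj
    rw [map_add, hιτ, hcomm₁ (σ g), hσ,
      congrFun (gd_map ρA ρB ι (map_add ι) hιG n E) g,
      congrFun (gd_map ρC ρB π₀' (map_add π₀') hπ₀'G n φC) g,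
      ← congrFun (gd_add ρB hρBadd n (fun u => π₀' (φC u)) (fun u => ι (E u))) g,
      show (fun u => π₀' (φC u) + ι (E u)) = (fun u => s (φ u)) from
        funext fun u => by rw [hιE u]; exact (add_sub_cancel _ _)]
  have hdσ : gd ρC (n+1) σ = 0 := by
    funext g
    apply hinj₀
    rw [congrFun (gd_map ρC ρC ι₀ (map_add ι₀) hι₀G (n+1) σ) g,
      show (fun u => ι₀ (σ u)) = DC from funext hσ, hDCdef,
      gd_gd ρC hρC1 hρCmul hρCadd n φC]
    simp
  set L : (Fin (n+1) → G) → B := fun g => π₀' (σ g) + gd ρB n (fun u => s (E u)) g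
    with hLdef
  have hπL : ∀ g, π (L g) = τ g := by
    intro g
    rw [hLdef]
    show π (π₀' (σ g) + gd ρB n (fun u => s (E u)) g) = τ g
    rw [map_add, hcomm₂,
      congrFun (gd_map ρB ρA π (map_add π) hπG n (fun u => s (E u))) g,
      show (fun u => π (s (E u))) = E from funext fun u => hs (E u), ← hτeq g]
  have hdL : gd ρB (n+1) L = 0 := by
    funext g
    have h1 := congrFun (gd_add ρB hρBadd (n+1) (fun g' => π₀' (σ g'))
      (gd ρB n (fun u => s (E u)))) g
    rw [hLdef]
    show gd ρB (n+1) (fun g' => π₀' (σ g') + gd ρB n (fun u => s (E u)) g') g = 0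
    rw [h1, gd_gd ρB hρB1 hρBmul hρBadd n (fun u => s (E u)),
      ← congrFun (gd_map ρC ρB π₀' (map_add π₀') hπ₀'G (n+1) σ) g, hdσ]
    simp
  refine ⟨fun g => r (s (τ g) - L g), ?_⟩
  have hψker : ∀ g, π (s (τ g) - L g) = 0 := fun g => by
    rw [map_sub, hs, hπL, sub_self]
  have hιψ : ∀ g, ι (r (s (τ g) - L g)) = s (τ g) - L g := fun g => hιr _ (hψker g)
  funext g
  show r (gd ρB (n+1) (fun t' => s (τ t')) g) = _
  rw [show (fun t' => s (τ t')) = (fun t' => L t' + ι (r (s (τ t') - L t'))) from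
      funext fun t' => by rw [hιψ t', add_sub_cancel],
    congrFun (gd_add ρB hρBadd (n+1) L (fun t' => ι (r (s (τ t') - L t')))) g,
    congrFun hdL g,
    ← congrFun (gd_map ρA ρB ι (map_add ι) hιG (n+1)
      (fun t' => r (s (τ t') - L t'))) g]
  rw [Pi.zero_apply, zero_add, hrι]
end

section
/- Assume the setup where for each x ∈ G there is a k-linear map r_x : Ker π → A (either arising from a short exact sequence in the compatible situation, or r_x = 0), s : A → B is a fixed section of the surjection π : B → A, and for all y, z ∈ G there exists a kG-module homomorphism r'_{y,z} : B → A with r_{yz} − r_y − r_z = r'_{y,z}|_{Ker π}. Then for all x, y ∈ G, the induced maps on cohomology satisfy θ_{G,A,xy}^* = θ_{G,A,x}^* + θ_{G,A,y}^*, where θ_{G,A,x}^*(φ̄) is the class of r_x ∘ ∂_B(s ∘ φ) for a cocycle φ. -/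
lemma gd_comm {k G A B : Type*} [CommRing k] [Group G]
    [AddCommGroup A] [Module k A] [AddCommGroup B] [Module k B]
    (ρA : G → A → A) (ρB : G → B → B)
    (f : B →ₗ[k] A) (hf : ∀ g b, f (ρB g b) = ρA g (f b))
    (n : ℕ) (u : (Fin n → G) → B) (g : Fin (n+1) → G) :
    f (gd ρB n u g) = gd ρA n (fun t => f (u t)) g := by
  simp [gd, map_add, map_sum, map_zsmul, hf]

/-- given a family of maps `r_x : Ker π → A` (`x ∈ G`) such that
`r_{yz} − r_y − r_z` is the restriction to `Ker π` of a `kG`-module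
homomorphism `B → A`, the induced maps on cohomology,
`θ_{G,A,x}(φ̄) = class of r_x ∘ ∂_B(s ∘ φ)`, satisfy
`θ_{G,A,xy} = θ_{G,A,x} + θ_{G,A,y}`: on cocycle representatives the difference
is a coboundary. -/
theorem stmt9 {k G A B : Type*} [CommRing k] [Group G] [Fintype G]
    [Ring A] [Algebra k A] [Ring B] [Algebra k B]
    (ρA : G → A → A) (ρB : G → B → B)
    (hρA1 : ∀ a, ρA 1 a = a)
    (hρAmul : ∀ g h a, ρA (g * h) a = ρA g (ρA h a))
    (hρAadd : ∀ g a a', ρA g (a + a') = ρA g a + ρA g a')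
    (hρAsmul : ∀ g (c : k) a, ρA g (c • a) = c • ρA g a)
    (hρAring : ∀ g a a', ρA g (a * a') = ρA g a * ρA g a')
    (hρB1 : ∀ b, ρB 1 b = b)
    (hρBmul : ∀ g h b, ρB (g * h) b = ρB g (ρB h b))
    (hρBadd : ∀ g b b', ρB g (b + b') = ρB g b + ρB g b')
    (hρBsmul : ∀ g (c : k) b, ρB g (c • b) = c • ρB g b)
    -- `π : B → A` surjective `kG`-module homomorphism, `Ker π` an ideal
    (π : B →ₗ[k] A)
    (hπG : ∀ g b, π (ρB g b) = ρA g (π b))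
    (hsurj : Function.Surjective π)
    (hker : ∀ b b', π b = 0 → π (b * b') = 0 ∧ π (b' * b) = 0)
    -- fixed set-theoretic section `s` of `π`
    (s : A → B) (hs : ∀ a, π (s a) = a)
    -- the family of `k`-linear maps `r_x : Ker π → A` (encoded as total maps)
    (r : G → B → A)
    (hradd : ∀ x b b', π b = 0 → π b' = 0 → r x (b + b') = r x b + r x b')
    (hrsmul : ∀ x (c : k) b, π b = 0 → r x (c • b) = c • r x b)
    -- cocycle condition: `r_{yz} − r_y − r_z` is the restriction of a `kG`-homomorphism
    (hcocycle : ∀ y z : G, ∃ r' : B →ₗ[k] A,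
      (∀ g b, r' (ρB g b) = ρA g (r' b)) ∧
      (∀ b, π b = 0 → r (y*z) b - r y b - r z b = r' b)) :
    ∀ x y : G, ∀ (n : ℕ) (φ : (Fin n → G) → A), gd ρA n φ = 0 →
      ∃ ψ : (Fin n → G) → A,
        (fun g => r (x*y) (gd ρB n (fun t => s (φ t)) g))
          = (fun g => r x (gd ρB n (fun t => s (φ t)) g))
            + (fun g => r y (gd ρB n (fun t => s (φ t)) g))
            + gd ρA n ψ := by
  intro x y n φ hφ
  obtain ⟨r', hr'G, hr'⟩ := hcocycle x y
  have hz : ∀ g : Fin (n+1) → G, π (gd ρB n (fun t => s (φ t)) g) = 0 := by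
    intro g
    rw [gd_comm ρA ρB π hπG]
    simp only [hs]
    exact congrFun hφ g
  refine ⟨fun t => r' (s (φ t)), ?_⟩
  funext g
  have h1 := hr' _ (hz g)
  have h2 := gd_comm ρA ρB r' hr'G n (fun t => s (φ t)) g
  simp only [Pi.add_apply]
  rw [← h2]
  linear_combination (norm := abel) h1
end

section
/- With the same hypotheses, the bracket [x⊗α, y⊗β] = xy ⊗ ((−1)^{|α|} θ_y(α)·β + α·θ_x(β)) on KG ⊗ H* satisfies the Poisson identity for a P_0 algebra: [x⊗α, (y⊗β)·(z⊗γ)] = [x⊗α, y⊗β]·(z⊗γ) + (−1)^{(|α|+1)|β|} (y⊗β)·[x⊗α, z⊗γ] for all x,y,z ∈ G and homogeneous α, β, γ ∈ H*. -/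
open TensorProduct

/-- The BD bracket on homogeneous elements of `KG ⊗ H*`:
`[x ⊗ α, y ⊗ β] = xy ⊗ ((−1)^{|α|} θ_y(α)·β + α·θ_x(β))`, where `m = |α|`. -/
noncomputable def brkt {K G A : Type*} [Field K] [CommGroup G] [Ring A] [Algebra K A]
    (θ : G → A →ₗ[K] A) (x : G) (m : ℤ) (α : A) (y : G) (β : A) :
    MonoidAlgebra K G ⊗[K] A :=
  MonoidAlgebra.single (x*y) (1:K) ⊗ₜ[K] (((-1:K)^m) • (θ y α * β) + α * θ x β)

/-- the bracket on `KG ⊗ H*` satisfies the Poisson identity of a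
`P₀` algebra:
`[x⊗α, (y⊗β)·(z⊗γ)] = [x⊗α, y⊗β]·(z⊗γ) + (−1)^{(|α|+1)|β|} (y⊗β)·[x⊗α, z⊗γ]`. -/
theorem stmt12 {K G A : Type*} [Field K] [CommGroup G] [Ring A] [Algebra K A]
    (𝒜 : ℤ → Submodule K A) [SetLike.GradedMonoid 𝒜]
    (hcomm : ∀ (m n : ℤ) (a b : A), a ∈ 𝒜 m → b ∈ 𝒜 n →
      a * b = ((-1:K)^(m*n)) • (b * a))
    (θ : G → A →ₗ[K] A)
    (hθdeg : ∀ (x : G) (m : ℤ) a, a ∈ 𝒜 m → θ x a ∈ 𝒜 (m+1))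
    (hθder : ∀ (x : G) (m : ℤ) (a b : A), a ∈ 𝒜 m →
      θ x (a * b) = θ x a * b + ((-1:K)^m) • (a * θ x b))
    (hθadd : ∀ x y : G, θ (x*y) = θ x + θ y)
    (hθcomp : ∀ x y : G, (θ x) ∘ₗ (θ y) = 0)
    (x y z : G) (m n t : ℤ) (α β γ : A)
    (hα : α ∈ 𝒜 m) (hβ : β ∈ 𝒜 n) (hγ : γ ∈ 𝒜 t) :
    brkt θ x m α (y*z) (β * γ)
      = brkt θ x m α y β * (MonoidAlgebra.single z (1:K) ⊗ₜ[K] γ)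
        + ((-1:K)^((m+1)*n)) •
          ((MonoidAlgebra.single y (1:K) ⊗ₜ[K] β) * brkt θ x m α z γ) := by
  have hne : (-1:K) ≠ 0 := by norm_num
  have hswap1 : β * θ z α = ((-1:K)^(n*(m+1))) • (θ z α * β) :=
    hcomm n (m+1) β (θ z α) hβ (hθdeg z m α hα)
  have hswap2 : β * α = ((-1:K)^(n*m)) • (α * β) := hcomm n m β α hβ hα
  have key : ((-1:K)^m) • (θ (y*z) α * (β * γ)) + α * θ x (β * γ)
      = (((-1:K)^m) • (θ y α * β) + α * θ x β) * γ
        + ((-1:K)^((m+1)*n)) •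
          (β * (((-1:K)^m) • (θ z α * γ) + α * θ x γ)) := by
    rw [hθadd y z, hθder x n β γ hβ]
    simp only [LinearMap.add_apply, mul_add, add_mul, smul_add, smul_mul_assoc,
      mul_smul_comm, smul_smul, ← mul_assoc]
    rw [hswap1, hswap2]
    simp only [smul_mul_assoc, mul_smul_comm, smul_smul, ← mul_assoc,
      ← zpow_add₀ hne]
    have e1 : ((-1:K)^(m*n + 1*n + m + n*(m+1))) = ((-1:K)^m) := by
      have h : m*n + 1*n + m + n*(m+1) = 2*(n*m+n) + m := by ring
      rw [h, zpow_add₀ hne, zpow_mul]; norm_num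
    have e2 : ((-1:K)^(m*n + 1*n + n*m)) = ((-1:K)^n) := by
      have h : m*n + 1*n + n*m = 2*(m*n) + n := by ring
      rw [h, zpow_add₀ hne, zpow_mul]; norm_num
    rw [e1, e2]
    abel
  have hg : y*(x*z) = x*y*z := by
    rw [mul_left_comm, mul_assoc]
  calc brkt θ x m α (y*z) (β * γ)
      = MonoidAlgebra.single (x*y*z) (1:K) ⊗ₜ[K]
          (((-1:K)^m) • (θ (y*z) α * (β*γ)) + α * θ x (β*γ)) := by
        rw [brkt, mul_assoc]
    _ = _ := by
        rw [key, TensorProduct.tmul_add, TensorProduct.tmul_smul]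
        congr 1
        · rw [brkt, Algebra.TensorProduct.tmul_mul_tmul,
            MonoidAlgebra.single_mul_single, mul_one]
        · rw [brkt, Algebra.TensorProduct.tmul_mul_tmul,
            MonoidAlgebra.single_mul_single, one_mul, hg]
end

section
/- With the same hypotheses, the bracket [x⊗α, y⊗β] = xy ⊗ ((−1)^{|α|} θ_y(α)·β + α·θ_x(β)) satisfies the graded Jacobi identity for the shift (KG ⊗ H*)[−1]: for all x,y,z ∈ G and homogeneous α, β, γ of degrees m, n, t, one has (−1)^{(m−1)(t−1)}[[x⊗α, y⊗β], z⊗γ] + (−1)^{(n−1)(m−1)}[[y⊗β, z⊗γ], x⊗α] + (−1)^{(t−1)(n−1)}[[z⊗γ, x⊗α], y⊗β] = 0. -/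
open TensorProduct

set_option maxHeartbeats 3000000 in
set_option maxRecDepth 8000 in
/-- the bracket on `KG ⊗ H*` satisfies the graded Jacobi identity
for the shift `(KG ⊗ H*)[−1]`:
`(−1)^{(m−1)(t−1)}[[x⊗α, y⊗β], z⊗γ] + (−1)^{(n−1)(m−1)}[[y⊗β, z⊗γ], x⊗α]
  + (−1)^{(t−1)(n−1)}[[z⊗γ, x⊗α], y⊗β] = 0`
(note `[x⊗α, y⊗β] = xy ⊗ δ` with `δ = (−1)^m θ_y(α)·β + α·θ_x(β)` homogeneous of
degree `m+n+1`). -/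
theorem stmt13 {K G A : Type*} [Field K] [CommGroup G] [Ring A] [Algebra K A]
    (𝒜 : ℤ → Submodule K A) [SetLike.GradedMonoid 𝒜]
    (hcomm : ∀ (m n : ℤ) (a b : A), a ∈ 𝒜 m → b ∈ 𝒜 n →
      a * b = ((-1:K)^(m*n)) • (b * a))
    (θ : G → A →ₗ[K] A)
    (hθdeg : ∀ (x : G) (m : ℤ) a, a ∈ 𝒜 m → θ x a ∈ 𝒜 (m+1))
    (hθder : ∀ (x : G) (m : ℤ) (a b : A), a ∈ 𝒜 m →
      θ x (a * b) = θ x a * b + ((-1:K)^m) • (a * θ x b))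
    (hθadd : ∀ x y : G, θ (x*y) = θ x + θ y)
    (hθcomp : ∀ x y : G, (θ x) ∘ₗ (θ y) = 0)
    (x y z : G) (m n t : ℤ) (α β γ : A)
    (hα : α ∈ 𝒜 m) (hβ : β ∈ 𝒜 n) (hγ : γ ∈ 𝒜 t) :
    ((-1:K)^((m-1)*(t-1))) •
        brkt θ (x*y) (m+n+1) (((-1:K)^m) • (θ y α * β) + α * θ x β) z γ
      + ((-1:K)^((n-1)*(m-1))) •
          brkt θ (y*z) (n+t+1) (((-1:K)^n) • (θ z β * γ) + β * θ y γ) x α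
      + ((-1:K)^((t-1)*(n-1))) •
          brkt θ (z*x) (t+m+1) (((-1:K)^t) • (θ x γ * α) + γ * θ z α) y β
      = 0 := by
  have hne : (-1:K) ≠ 0 := by norm_num
  have hfuse : ∀ a b : ℤ, (-1:K)^a * (-1:K)^b = (-1:K)^(a+b) :=
    fun a b => (zpow_add₀ hne a b).symm
  have hEe : ∀ a b : ℤ, Even (a - b) → (-1:K)^a = (-1:K)^b := by
    intro a b h
    obtain ⟨k, hk⟩ := h
    have ha : a = b + 2*k := by omega
    have h2 : ((-1:K))^(2*k) = 1 := Even.neg_one_zpow ⟨k, by ring⟩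
    rw [ha, zpow_add₀ hne, h2, mul_one]
  have hOo : ∀ a b : ℤ, ¬ Even (a - b) → (-1:K)^a + (-1:K)^b = 0 := by
    intro a b h
    obtain ⟨k, hk⟩ := Int.not_even_iff_odd.mp h
    have ha : a = b + (2*k+1) := by omega
    have h2 : ((-1:K))^(2*k+1) = -1 := Odd.neg_one_zpow ⟨k, by ring⟩
    rw [ha, zpow_add₀ hne, h2]
    ring
  have hsum : ∀ a b k : ℤ, a - b = 2*k+1 → (-1:K)^a + (-1:K)^b = 0 := by
    intro a b k h
    refine hOo a b ?_
    rw [Int.not_even_iff_odd]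
    exact ⟨k, h⟩
  -- memberships
  have hAy : θ y α ∈ 𝒜 (m+1) := hθdeg y m α hα
  have hAz : θ z α ∈ 𝒜 (m+1) := hθdeg z m α hα
  have hBx : θ x β ∈ 𝒜 (n+1) := hθdeg x n β hβ
  have hBz : θ z β ∈ 𝒜 (n+1) := hθdeg z n β hβ
  have hCx : θ x γ ∈ 𝒜 (t+1) := hθdeg x t γ hγ
  have hCy : θ y γ ∈ 𝒜 (t+1) := hθdeg y t γ hγ
  -- vanishing compositions
  have z1 : θ z (θ y α) = 0 := by simpa using LinearMap.congr_fun (hθcomp z y) α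
  have z2 : θ z (θ x β) = 0 := by simpa using LinearMap.congr_fun (hθcomp z x) β
  have z3 : θ x (θ z β) = 0 := by simpa using LinearMap.congr_fun (hθcomp x z) β
  have z4 : θ x (θ y γ) = 0 := by simpa using LinearMap.congr_fun (hθcomp x y) γ
  have z5 : θ y (θ x γ) = 0 := by simpa using LinearMap.congr_fun (hθcomp y x) γ
  have z6 : θ y (θ z α) = 0 := by simpa using LinearMap.congr_fun (hθcomp y z) α
  -- derivation expansions
  have d1 : θ z (θ y α * β) = ((-1:K)^(m+1)) • (θ y α * θ z β) := by
    rw [hθder z (m+1) (θ y α) β hAy, z1, zero_mul, zero_add]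
  have d2 : θ z (α * θ x β) = θ z α * θ x β := by
    rw [hθder z m α (θ x β) hα, z2, mul_zero, smul_zero, add_zero]
  have d3 : θ x (θ z β * γ) = ((-1:K)^(n+1)) • (θ z β * θ x γ) := by
    rw [hθder x (n+1) (θ z β) γ hBz, z3, zero_mul, zero_add]
  have d4 : θ x (β * θ y γ) = θ x β * θ y γ := by
    rw [hθder x n β (θ y γ) hβ, z4, mul_zero, smul_zero, add_zero]
  have d5 : θ y (θ x γ * α) = ((-1:K)^(t+1)) • (θ x γ * θ y α) := by
    rw [hθder y (t+1) (θ x γ) α hCx, z5, zero_mul, zero_add]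
  have d6 : θ y (γ * θ z α) = θ y γ * θ z α := by
    rw [hθder y t γ (θ z α) hγ, z6, mul_zero, smul_zero, add_zero]
  -- additivity
  have a1 : θ (x*y) γ = θ x γ + θ y γ := by rw [hθadd]; rfl
  have a2 : θ (y*z) α = θ y α + θ z α := by rw [hθadd]; rfl
  have a3 : θ (z*x) β = θ z β + θ x β := by rw [hθadd]; rfl
  -- commutations to canonical order (α-part, β-part, γ-part)
  have c7 : θ z β * θ x γ * α = ((-1:K)^((n+1+(t+1))*m)) • (α * θ z β * θ x γ) := by
    rw [hcomm (n+1+(t+1)) m (θ z β * θ x γ) α (SetLike.mul_mem_graded hBz hCx) hα, mul_assoc]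
  have c8 : θ x β * θ y γ * α = ((-1:K)^((n+1+(t+1))*m)) • (α * θ x β * θ y γ) := by
    rw [hcomm (n+1+(t+1)) m (θ x β * θ y γ) α (SetLike.mul_mem_graded hBx hCy) hα, mul_assoc]
  have c9 : θ z β * γ * θ y α = ((-1:K)^((n+1+t)*(m+1))) • (θ y α * θ z β * γ) := by
    rw [hcomm (n+1+t) (m+1) (θ z β * γ) (θ y α) (SetLike.mul_mem_graded hBz hγ) hAy, mul_assoc]
  have c10 : θ z β * γ * θ z α = ((-1:K)^((n+1+t)*(m+1))) • (θ z α * θ z β * γ) := by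
    rw [hcomm (n+1+t) (m+1) (θ z β * γ) (θ z α) (SetLike.mul_mem_graded hBz hγ) hAz, mul_assoc]
  have c11 : β * θ y γ * θ y α = ((-1:K)^((n+(t+1))*(m+1))) • (θ y α * β * θ y γ) := by
    rw [hcomm (n+(t+1)) (m+1) (β * θ y γ) (θ y α) (SetLike.mul_mem_graded hβ hCy) hAy, mul_assoc]
  have c12 : β * θ y γ * θ z α = ((-1:K)^((n+(t+1))*(m+1))) • (θ z α * β * θ y γ) := by
    rw [hcomm (n+(t+1)) (m+1) (β * θ y γ) (θ z α) (SetLike.mul_mem_graded hβ hCy) hAz, mul_assoc]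
  have c13 : θ x γ * θ y α * β = ((-1:K)^((t+1)*(m+1+n))) • (θ y α * β * θ x γ) := by
    rw [mul_assoc, hcomm (t+1) (m+1+n) (θ x γ) (θ y α * β) hCx (SetLike.mul_mem_graded hAy hβ)]
  have c14 : θ y γ * θ z α * β = ((-1:K)^((t+1)*(m+1+n))) • (θ z α * β * θ y γ) := by
    rw [mul_assoc, hcomm (t+1) (m+1+n) (θ y γ) (θ z α * β) hCy (SetLike.mul_mem_graded hAz hβ)]
  have c15 : θ x γ * α * θ z β = ((-1:K)^((t+1)*(m+(n+1)))) • (α * θ z β * θ x γ) := by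
    rw [mul_assoc, hcomm (t+1) (m+(n+1)) (θ x γ) (α * θ z β) hCx (SetLike.mul_mem_graded hα hBz)]
  have c16 : θ x γ * α * θ x β = ((-1:K)^((t+1)*(m+(n+1)))) • (α * θ x β * θ x γ) := by
    rw [mul_assoc, hcomm (t+1) (m+(n+1)) (θ x γ) (α * θ x β) hCx (SetLike.mul_mem_graded hα hBx)]
  have c17 : γ * θ z α * θ z β = ((-1:K)^(t*(m+1+(n+1)))) • (θ z α * θ z β * γ) := by
    rw [mul_assoc, hcomm t (m+1+(n+1)) γ (θ z α * θ z β) hγ (SetLike.mul_mem_graded hAz hBz)]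
  have c18 : γ * θ z α * θ x β = ((-1:K)^(t*(m+1+(n+1)))) • (θ z α * θ x β * γ) := by
    rw [mul_assoc, hcomm t (m+1+(n+1)) γ (θ z α * θ x β) hγ (SetLike.mul_mem_graded hAz hBx)]
  -- expansions of the three inner brackets
  have HE1 : ((-1:K)^(m+n+1)) • (θ z (((-1:K)^m) • (θ y α * β) + α * θ x β) * γ)
        + (((-1:K)^m) • (θ y α * β) + α * θ x β) * θ (x*y) γ
      = ((-1:K)^(m+n+1) * ((-1:K)^m * (-1:K)^(m+1))) • (θ y α * θ z β * γ)
        + (-1:K)^(m+n+1) • (θ z α * θ x β * γ)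
        + (-1:K)^m • (θ y α * β * θ x γ)
        + (-1:K)^m • (θ y α * β * θ y γ)
        + α * θ x β * θ x γ
        + α * θ x β * θ y γ := by
    rw [a1, map_add, map_smul, d1, d2]
    simp only [smul_add, mul_add, add_mul, smul_mul_assoc, smul_smul]
    module
  have HE2 : ((-1:K)^(n+t+1)) • (θ x (((-1:K)^n) • (θ z β * γ) + β * θ y γ) * α)
        + (((-1:K)^n) • (θ z β * γ) + β * θ y γ) * θ (y*z) α
      = ((-1:K)^(n+t+1) * ((-1:K)^n * (-1:K)^(n+1)) * (-1:K)^((n+1+(t+1))*m)) • (α * θ z β * θ x γ)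
        + ((-1:K)^(n+t+1) * (-1:K)^((n+1+(t+1))*m)) • (α * θ x β * θ y γ)
        + ((-1:K)^n * (-1:K)^((n+1+t)*(m+1))) • (θ y α * θ z β * γ)
        + ((-1:K)^n * (-1:K)^((n+1+t)*(m+1))) • (θ z α * θ z β * γ)
        + (-1:K)^((n+(t+1))*(m+1)) • (θ y α * β * θ y γ)
        + (-1:K)^((n+(t+1))*(m+1)) • (θ z α * β * θ y γ) := by
    rw [a2, map_add, map_smul, d3, d4]
    simp only [smul_add, mul_add, add_mul, smul_mul_assoc, smul_smul]
    rw [c7, c8, c9, c10, c11, c12]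
    simp only [smul_smul]
    match_scalars <;>
    · simp only [hfuse, one_mul, mul_one, add_zero, zero_add]
      first
      | ring1
      | (refine congrArg (fun e : ℤ => ((-1:K))^e) ?_ ; ring)
  have HE3 : ((-1:K)^(t+m+1)) • (θ y (((-1:K)^t) • (θ x γ * α) + γ * θ z α) * β)
        + (((-1:K)^t) • (θ x γ * α) + γ * θ z α) * θ (z*x) β
      = ((-1:K)^(t+m+1) * ((-1:K)^t * (-1:K)^(t+1)) * (-1:K)^((t+1)*(m+1+n))) • (θ y α * β * θ x γ)
        + ((-1:K)^(t+m+1) * (-1:K)^((t+1)*(m+1+n))) • (θ z α * β * θ y γ)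
        + ((-1:K)^t * (-1:K)^((t+1)*(m+(n+1)))) • (α * θ z β * θ x γ)
        + ((-1:K)^t * (-1:K)^((t+1)*(m+(n+1)))) • (α * θ x β * θ x γ)
        + (-1:K)^(t*(m+1+(n+1))) • (θ z α * θ z β * γ)
        + (-1:K)^(t*(m+1+(n+1))) • (θ z α * θ x β * γ) := by
    rw [a3, map_add, map_smul, d5, d6]
    simp only [smul_add, mul_add, add_mul, smul_mul_assoc, smul_smul]
    rw [c13, c14, c15, c16, c17, c18]
    simp only [smul_smul]
    match_scalars <;>
    · simp only [hfuse, one_mul, mul_one, add_zero, zero_add]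
      first
      | ring1
      | (refine congrArg (fun e : ℤ => ((-1:K))^e) ?_ ; ring)
  -- the main identity in A
  have Hmain : ((-1:K)^((m-1)*(t-1))) •
        (((-1:K)^(m+n+1)) • (θ z (((-1:K)^m) • (θ y α * β) + α * θ x β) * γ)
          + (((-1:K)^m) • (θ y α * β) + α * θ x β) * θ (x*y) γ)
      + ((-1:K)^((n-1)*(m-1))) •
          (((-1:K)^(n+t+1)) • (θ x (((-1:K)^n) • (θ z β * γ) + β * θ y γ) * α)
            + (((-1:K)^n) • (θ z β * γ) + β * θ y γ) * θ (y*z) α)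
      + ((-1:K)^((t-1)*(n-1))) •
          (((-1:K)^(t+m+1)) • (θ y (((-1:K)^t) • (θ x γ * α) + γ * θ z α) * β)
            + (((-1:K)^t) • (θ x γ * α) + γ * θ z α) * θ (z*x) β)
      = 0 := by
    rw [HE1, HE2, HE3]
    match_scalars <;>
    · simp only [hfuse, one_mul, mul_one, add_zero, zero_add]
      first
      | (refine hsum _ _ (m - t - m*n) ?_ ; ring1)
      | (refine hsum _ _ (-(m - t - m*n) - 1) ?_ ; ring1)
      | (refine hsum _ _ (n - t - n*t) ?_ ; ring1)
      | (refine hsum _ _ (-(n - t - n*t) - 1) ?_ ; ring1)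
      | (refine hsum _ _ (-m - n*t - 2*t - 2) ?_ ; ring1)
      | (refine hsum _ _ (-(-m - n*t - 2*t - 2) - 1) ?_ ; ring1)
      | (refine hsum _ _ (-m*n - t - 1) ?_ ; ring1)
      | (refine hsum _ _ (-(-m*n - t - 1) - 1) ?_ ; ring1)
      | (refine hsum _ _ (-m - n*t - t - 1) ?_ ; ring1)
      | (refine hsum _ _ (-(-m - n*t - t - 1) - 1) ?_ ; ring1)
      | (refine hsum _ _ (-m - m*n - t - 1) ?_ ; ring1)
      | (refine hsum _ _ (-(-m - m*n - t - 1) - 1) ?_ ; ring1)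
      | (refine hsum _ _ (m*n + n - n*t) ?_ ; ring1)
      | (refine hsum _ _ (-(m*n + n - n*t) - 1) ?_ ; ring1)
      | (refine hsum _ _ (m*n - m - n*t - 1) ?_ ; ring1)
      | (refine hsum _ _ (-(m*n - m - n*t - 1) - 1) ?_ ; ring1)
  -- group elements coincide
  have hg2 : (y*z)*x = (x*y)*z := by
    rw [mul_comm (y*z) x, mul_assoc]
  have hg3 : (z*x)*y = (x*y)*z := by
    rw [mul_comm (z*x) y, mul_comm z x, ← mul_assoc, mul_comm y x]
  simp only [brkt, hg2, hg3]
  rw [← TensorProduct.tmul_smul, ← TensorProduct.tmul_smul, ← TensorProduct.tmul_smul,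
    ← TensorProduct.tmul_add, ← TensorProduct.tmul_add, Hmain, TensorProduct.tmul_zero]
end

section
/- With the same hypotheses, define Δ : KG ⊗ H* → KG ⊗ H^{*+1} by Δ(x ⊗ α) = x ⊗ θ_x(α). Then Δ ∘ Δ = 0, and for all x,y ∈ G and homogeneous α, β: [x⊗α, y⊗β] = (−1)^{|α|} Δ((x⊗α)·(y⊗β)) − (−1)^{|α|} Δ(x⊗α)·(y⊗β) − (x⊗α)·Δ(y⊗β). Consequently (KG ⊗ H*, ·, [·,·], Δ) is a BD algebra (a P_0 algebra with a square-zero degree +1 operator whose failure to be a derivation is the bracket). -/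
open TensorProduct

/-- the operator `Δ(x ⊗ α) = x ⊗ θ_x(α)` on `KG ⊗ H*` squares to
zero and its failure to be a derivation is the bracket:
`[x⊗α, y⊗β] = (−1)^{|α|} Δ((x⊗α)·(y⊗β)) − (−1)^{|α|} Δ(x⊗α)·(y⊗β) − (x⊗α)·Δ(y⊗β)`;
consequently `(KG ⊗ H*, ·, [·,·], Δ)` is a BD algebra. -/
theorem stmt14 {K G A : Type*} [Field K] [CommGroup G] [Ring A] [Algebra K A]
    (𝒜 : ℤ → Submodule K A) [SetLike.GradedMonoid 𝒜]
    (hcomm : ∀ (m n : ℤ) (a b : A), a ∈ 𝒜 m → b ∈ 𝒜 n →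
      a * b = ((-1:K)^(m*n)) • (b * a))
    (θ : G → A →ₗ[K] A)
    (hθdeg : ∀ (x : G) (m : ℤ) a, a ∈ 𝒜 m → θ x a ∈ 𝒜 (m+1))
    (hθder : ∀ (x : G) (m : ℤ) (a b : A), a ∈ 𝒜 m →
      θ x (a * b) = θ x a * b + ((-1:K)^m) • (a * θ x b))
    (hθadd : ∀ x y : G, θ (x*y) = θ x + θ y)
    (hθcomp : ∀ x y : G, (θ x) ∘ₗ (θ y) = 0)
    (x y : G) (m n : ℤ) (α β : A) (hα : α ∈ 𝒜 m) (hβ : β ∈ 𝒜 n) :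
    (∀ (z : G) (a : A),
      MonoidAlgebra.single z (1:K) ⊗ₜ[K] θ z (θ z a) = (0 : MonoidAlgebra K G ⊗[K] A))
    ∧ brkt θ x m α y β
        = ((-1:K)^m) • (MonoidAlgebra.single (x*y) (1:K) ⊗ₜ[K] θ (x*y) (α * β))
          - ((-1:K)^m) • ((MonoidAlgebra.single x (1:K) ⊗ₜ[K] θ x α)
              * (MonoidAlgebra.single y (1:K) ⊗ₜ[K] β))
          - (MonoidAlgebra.single x (1:K) ⊗ₜ[K] α)
              * (MonoidAlgebra.single y (1:K) ⊗ₜ[K] θ y β) := by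
  constructor
  · intro z a
    have h : θ z (θ z a) = 0 := by
      have := hθcomp z z
      exact congrFun (congrArg (fun f => f.toFun) this) a
    rw [h, TensorProduct.tmul_zero]
  · rw [brkt, Algebra.TensorProduct.tmul_mul_tmul, Algebra.TensorProduct.tmul_mul_tmul,
      MonoidAlgebra.single_mul_single, one_mul, hθadd, LinearMap.add_apply,
      hθder x m α β hα, hθder y m α β hα, ← TensorProduct.tmul_smul,
      ← TensorProduct.tmul_smul, ← TensorProduct.tmul_sub, ← TensorProduct.tmul_sub]
    congr 1
    have key : ((-1:K)^m * (-1:K)^m) = 1 := by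
      rw [← zpow_add₀ (by norm_num : (-1:K) ≠ 0), ← two_mul]
      exact Even.neg_one_zpow ⟨m, two_mul m⟩
    have h1 : ((-1:K)^m) • (((-1:K)^m) • (α * θ x β)) = α * θ x β := by
      rw [smul_smul, key, one_smul]
    have h2 : ((-1:K)^m) • (((-1:K)^m) • (α * θ y β)) = α * θ y β := by
      rw [smul_smul, key, one_smul]
    rw [smul_add, smul_add, smul_add, h1, h2]
    abel
end
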